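/- Let H ⊂ L(X) be an RKHA and φ : S → X any map. Let H(k∘φ) be the pullback RKHS on S with kernel (s,t) ↦ k(φ(s),φ(t)) and T_φ : H(k∘φ) → H the isometry with T_φ((k∘φ)_s) = k_{φ(s)}. Then (T_φ* ⊗ T_φ*) Δ T_φ is a bounded operator on H(k∘φ) sending (k∘φ)_s to (k∘φ)_s ⊗ (k∘φ)_s; hence H(k∘φ) is an RKHA. -/

import Mathlib

open scoped ComplexInnerProductSpace

noncomputable section

/-- An abstract Hilbert tensor product structure: a bilinear map `tmul` whose
elementary tensors satisfy the inner product identity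
`⟪a ⊗ b, c ⊗ d⟫ = ⟪a, c⟫ ⟪b, d⟫` and whose elementary tensors span a dense subspace. -/
structure TensorLike (H K HT : Type*) [NormedAddCommGroup H] [InnerProductSpace ℂ H]
    [NormedAddCommGroup K] [InnerProductSpace ℂ K]
    [NormedAddCommGroup HT] [InnerProductSpace ℂ HT] where
  tmul : H →ₗ[ℂ] K →ₗ[ℂ] HT
  inner_tmul : ∀ (a c : H) (b d : K),
    ⟪tmul a b, tmul c d⟫ = ⟪a, c⟫ * ⟪b, d⟫
  dense_span : Dense (Submodule.span ℂ (Set.range fun p : H × K => tmul p.1 p.2) : Set HT)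

/-- the pullback `H(k∘φ)` of an RKHA along `φ : S → X` is an RKHA:
`(T_φ* ⊗ T_φ*) Δ T_φ` is a bounded operator sending `(k∘φ)_s` to
`(k∘φ)_s ⊗ (k∘φ)_s` (with norm at most `‖Δ‖`). -/
theorem stmt_6 {X S H HT Hφ HTφ : Type*}
    [NormedAddCommGroup H] [InnerProductSpace ℂ H] [CompleteSpace H]
    [NormedAddCommGroup HT] [InnerProductSpace ℂ HT] [CompleteSpace HT]
    [NormedAddCommGroup Hφ] [InnerProductSpace ℂ Hφ] [CompleteSpace Hφ]
    [NormedAddCommGroup HTφ] [InnerProductSpace ℂ HTφ] [CompleteSpace HTφ]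
    (k : X → H) (T : TensorLike H H HT) (Δ : H →L[ℂ] HT)
    (hΔ : ∀ x, Δ (k x) = T.tmul (k x) (k x))
    (φ : S → X) (kφ : S → Hφ)
    (hdense : Dense (Submodule.span ℂ (Set.range kφ) : Set Hφ))
    (Tφ : Hφ →L[ℂ] H) (hiso : ∀ f, ‖Tφ f‖ = ‖f‖)
    (hTφ : ∀ s, Tφ (kφ s) = k (φ s))
    (Tt : TensorLike Hφ Hφ HTφ) :
    ∃ Δφ : Hφ →L[ℂ] HTφ,
      (∀ s, Δφ (kφ s) = Tt.tmul (kφ s) (kφ s)) ∧ ‖Δφ‖ ≤ ‖Δ‖ := by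
  classical
  -- Tφ preserves inner products
  have hTinner : ∀ a b : Hφ, ⟪Tφ a, Tφ b⟫ = ⟪a, b⟫ :=
    (LinearIsometry.inner_map_map ⟨Tφ.toLinearMap, hiso⟩)
  set v : Hφ × Hφ → HTφ := fun p => Tt.tmul p.1 p.2 with hv
  set w : Hφ × Hφ → HT := fun p => T.tmul (Tφ p.1) (Tφ p.2) with hw
  set G : ((Hφ × Hφ) →₀ ℂ) →ₗ[ℂ] HTφ := Finsupp.linearCombination ℂ v with hG
  set F : ((Hφ × Hφ) →₀ ℂ) →ₗ[ℂ] HT := Finsupp.linearCombination ℂ w with hF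
  have hinner : ∀ x y : (Hφ × Hφ) →₀ ℂ, ⟪F x, F y⟫ = ⟪G x, G y⟫ := by
    intro x y
    rw [hF, hG, Finsupp.linearCombination_apply, Finsupp.linearCombination_apply,
      Finsupp.linearCombination_apply, Finsupp.linearCombination_apply,
      Finsupp.sum, Finsupp.sum, Finsupp.sum, Finsupp.sum,
      sum_inner, sum_inner]
    refine Finset.sum_congr rfl fun p _ => ?_
    rw [inner_sum, inner_sum]
    refine Finset.sum_congr rfl fun q _ => ?_
    rw [inner_smul_left, inner_smul_left, inner_smul_right, inner_smul_right]
    congr 1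
    congr 1
    simp only [hv, hw]
    rw [T.inner_tmul, Tt.inner_tmul, hTinner, hTinner]
  have hnorm : ∀ x : (Hφ × Hφ) →₀ ℂ, ‖F x‖ = ‖G x‖ := by
    intro x
    have h1 := hinner x x
    rw [@norm_eq_sqrt_re_inner ℂ, @norm_eq_sqrt_re_inner ℂ, h1]
  have hker : LinearMap.ker G ≤ LinearMap.ker F := by
    intro x hx
    rw [LinearMap.mem_ker] at hx ⊢
    rw [← norm_eq_zero, hnorm, hx, norm_zero]
  -- the submodule of elementary tensor combinations
  set M : Submodule ℂ HTφ := LinearMap.range G with hM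
  have hMdense : Dense (M : Set HTφ) := by
    rw [hM, Finsupp.range_linearCombination]
    exact Tt.dense_span
  -- the isometry R0 : M → HT
  set e := LinearMap.quotKerEquivRange G with he
  set R0 : M →ₗ[ℂ] HT := ((LinearMap.ker G).liftQ F hker).comp e.symm.toLinearMap with hR0
  have hR0app : ∀ x : (Hφ × Hφ) →₀ ℂ, ∀ hx : G x ∈ M, R0 ⟨G x, hx⟩ = F x := by
    intro x hx
    have h2 : e (Submodule.Quotient.mk x) = ⟨G x, hx⟩ :=
      Subtype.ext (LinearMap.quotKerEquivRange_apply_mk G x)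
    rw [hR0]
    simp only [LinearMap.comp_apply, LinearEquiv.coe_toLinearMap]
    rw [← h2, LinearEquiv.symm_apply_apply]
    exact Submodule.liftQ_apply _ F x
  have hR0iso : ∀ m : M, ‖R0 m‖ = ‖m‖ := by
    rintro ⟨_, x, rfl⟩
    rw [hR0app x ⟨x, rfl⟩, hnorm]
    rfl
  set R0c : M →L[ℂ] HT := R0.mkContinuous 1 (fun m => by rw [hR0iso]; simp) with hR0c
  set ι : M →L[ℂ] HTφ := M.subtypeL with hι
  have hιiso : Isometry ι := isometry_subtype_coe
  have hιdense : DenseRange ι := by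
    rw [DenseRange, hι]
    convert hMdense
    exact Subtype.range_coe
  set R : HTφ →L[ℂ] HT := R0c.extend ι with hR
  have hRapp : ∀ m : M, R (ι m) = R0 m := fun m =>
    ContinuousLinearMap.extend_eq (f := R0c) (e := ι) hιdense hιiso.isUniformInducing m
  have hRiso : ∀ u : HTφ, ‖R u‖ = ‖u‖ := by
    have : Set.EqOn (fun u => ‖R u‖) (fun u => ‖u‖) (Set.range ι) := by
      rintro _ ⟨m, rfl⟩
      simp only
      rw [hRapp, hR0iso]
      exact congrArg Norm.norm rfl
    have hcont1 : Continuous fun u : HTφ => ‖R u‖ := R.continuous.norm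
    have := Continuous.ext_on hιdense hcont1 continuous_norm this
    exact fun u => congrFun this u
  have hRinner : ∀ u u' : HTφ, ⟪R u, R u'⟫ = ⟪u, u'⟫ :=
    (LinearIsometry.inner_map_map ⟨R.toLinearMap, hRiso⟩)
  -- R sends elementary tensors to elementary tensors
  have hRtmul : ∀ a b : Hφ, R (Tt.tmul a b) = T.tmul (Tφ a) (Tφ b) := by
    intro a b
    have hx : G (Finsupp.single (a, b) 1) = Tt.tmul a b := by
      rw [hG, Finsupp.linearCombination_single, one_smul]
    have hmem : Tt.tmul a b ∈ M := ⟨Finsupp.single (a, b) 1, hx⟩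
    have : ι ⟨Tt.tmul a b, hmem⟩ = Tt.tmul a b := rfl
    rw [← this, hRapp]
    have := hR0app (Finsupp.single (a, b) 1) (hx ▸ hmem)
    rw [show (⟨Tt.tmul a b, hmem⟩ : M) = ⟨G (Finsupp.single (a,b) 1), hx ▸ hmem⟩ from by
      simp [hx], this]
    rw [hF, Finsupp.linearCombination_single, one_smul]
  set Q := ContinuousLinearMap.adjoint R with hQ
  have hQR : ∀ u : HTφ, Q (R u) = u := by
    intro u
    refine ext_inner_right ℂ fun y => ?_
    rw [hQ, ContinuousLinearMap.adjoint_inner_left, hRinner]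
  refine ⟨Q.comp (Δ.comp Tφ), fun s => ?_, ?_⟩
  · simp only [ContinuousLinearMap.comp_apply]
    rw [hTφ, hΔ, ← hTφ, ← hRtmul, hQR]
  · calc ‖Q.comp (Δ.comp Tφ)‖ ≤ ‖Q‖ * ‖Δ.comp Tφ‖ := ContinuousLinearMap.opNorm_comp_le _ _
      _ ≤ ‖Q‖ * (‖Δ‖ * ‖Tφ‖) := by
          exact mul_le_mul_of_nonneg_left (ContinuousLinearMap.opNorm_comp_le _ _)
            (norm_nonneg _)
      _ ≤ 1 * (‖Δ‖ * 1) := by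
          have hQn : ‖Q‖ ≤ 1 := by
            rw [hQ, LinearIsometryEquiv.norm_map ContinuousLinearMap.adjoint R]
            exact R.opNorm_le_bound zero_le_one (fun u => by rw [hRiso, one_mul])
          have hTn : ‖Tφ‖ ≤ 1 :=
            Tφ.opNorm_le_bound zero_le_one (fun u => by rw [hiso, one_mul])
          have := mul_le_mul hQn (mul_le_mul_of_nonneg_left hTn (norm_nonneg Δ))
            (by positivity) zero_le_one
          linarith
      _ = ‖Δ‖ := by ring
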